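/- Let ν be a string-monotonic function and G a finite prefix-free set of finite binary strings. Then S_G is the union over N ∈ ℕ of the sets of sequences extending some element of G^N_ν, these sets are increasing in N, and μ(S_G) = sup_N |G^N_ν|·2^{-N}; in particular |G^N_ν|·2^{-N} converges to μ(S_G) as N → ∞. -/

import Mathlib

open scoped Classical

/-- The first `n` bits of an infinite binary sequence, as a finite string. -/
def firstN (α : ℕ → Bool) (n : ℕ) : List Bool := List.ofFn fun i : Fin n => α i

/-- The set of infinite binary sequences extending the finite string `x`. -/
def cylSet (x : List Bool) : Set (ℕ → Bool) := {α | ∀ i : Fin x.length, α i = x.get i}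

/-- A set of finite binary strings is prefix-free if no element is a proper prefix
of another element. -/
def PrefixFree (A : Set (List Bool)) : Prop :=
  ∀ x ∈ A, ∀ y ∈ A, x <+: y → x = y

/-- A function on finite binary strings is string-monotonic if it is total computable
and monotone with respect to the prefix relation. -/
def StringMonotonic (ν : List Bool → List Bool) : Prop :=
  Computable ν ∧ ∀ x y : List Bool, ν x <+: ν (x ++ y)

/-- `S_G`: sequences α such that some prefix of α is mapped by ν to a string
with a prefix in `G`. -/
def SG (ν : List Bool → List Bool) (G : Finset (List Bool)) : Set (ℕ → Bool) :=
  {α | ∃ n : ℕ, ∃ x ∈ G, x <+: ν (firstN α n)}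

/-- `G^N_ν`: strings of length `N` whose ν-image has a prefix in `G`. -/
noncomputable def GN (ν : List Bool → List Bool) (G : Finset (List Bool)) (N : ℕ) :
    Finset (List Bool) :=
  ((Finset.univ : Finset (Fin N → Bool)).image fun f => List.ofFn f).filter
    fun y => ∃ x ∈ G, x <+: ν y

lemma firstN_length (α : ℕ → Bool) (n : ℕ) : (firstN α n).length = n := List.length_ofFn

lemma firstN_getElem (α : ℕ → Bool) (n : ℕ) (i : ℕ) (h : i < (firstN α n).length) :
    (firstN α n)[i] = α i := by simp [firstN]

lemma mem_cylSet_iff (α : ℕ → Bool) (y : List Bool) :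
    α ∈ cylSet y ↔ firstN α y.length = y := by
  constructor
  · intro h
    apply List.ext_getElem (by simp [firstN])
    intro i h1 h2
    rw [firstN_getElem]
    exact h ⟨i, h2⟩
  · intro h i
    have hi : (i : ℕ) < (firstN α y.length).length := by rw [firstN_length]; exact i.isLt
    have h2 := firstN_getElem α y.length i hi
    have h3 := List.getElem_of_eq h hi
    simp only [List.get_eq_getElem]
    rw [← h3, h2]

lemma firstN_prefix (α : ℕ → Bool) {N M : ℕ} (h : N ≤ M) : firstN α N <+: firstN α M := by
  refine ⟨List.ofFn (fun i : Fin (M - N) => α (N + i)), ?_⟩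
  apply List.ext_getElem (by simp [firstN]; omega)
  intro i h1 h2
  rw [firstN_getElem]
  rcases lt_or_ge i N with hc | hc
  · rw [List.getElem_append_left (by simpa [firstN_length] using hc), firstN_getElem]
  · rw [List.getElem_append_right (by simpa [firstN_length] using hc)]
    simp only [firstN_length, List.getElem_ofFn]
    congr 1
    omega

lemma mem_GN_iff (ν : List Bool → List Bool) (G : Finset (List Bool)) (N : ℕ)
    (y : List Bool) : y ∈ GN ν G N ↔ y.length = N ∧ ∃ x ∈ G, x <+: ν y := by
  unfold GN
  simp only [Finset.mem_filter, Finset.mem_image, Finset.mem_univ, true_and]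
  constructor
  · rintro ⟨⟨f, rfl⟩, h⟩
    exact ⟨List.length_ofFn, h⟩
  · rintro ⟨hlen, h⟩
    refine ⟨⟨fun i => y.get (Fin.cast hlen.symm i), ?_⟩, h⟩
    subst hlen
    simpa using List.ofFn_get y

lemma measurable_cylSet (y : List Bool) : MeasurableSet (cylSet y) := by
  have : cylSet y = ⋂ i : Fin y.length, (fun α : ℕ → Bool => α i) ⁻¹' {y.get i} := by
    ext α; simp [cylSet]
  rw [this]
  exact MeasurableSet.iInter fun i =>
    (measurable_pi_apply (i : ℕ)) (MeasurableSet.singleton _)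

theorem stmt_5
    (μ : MeasureTheory.Measure (ℕ → Bool)) [MeasureTheory.IsProbabilityMeasure μ]
    (hμ : ∀ x : List Bool, μ (cylSet x) = (2 : ENNReal) ^ (-(x.length : ℤ)))
    (ν : List Bool → List Bool) (hν : StringMonotonic ν)
    (G : Finset (List Bool)) (hG : PrefixFree (↑G : Set (List Bool))) :
    (SG ν G = ⋃ N : ℕ, ⋃ y ∈ GN ν G N, cylSet y) ∧
    (Monotone fun N : ℕ => ⋃ y ∈ GN ν G N, cylSet y) ∧
    (μ (SG ν G) = ⨆ N : ℕ, ((GN ν G N).card : ENNReal) * (2 : ENNReal) ^ (-(N : ℤ))) ∧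
    Filter.Tendsto
      (fun N : ℕ => ((GN ν G N).card : ENNReal) * (2 : ENNReal) ^ (-(N : ℤ)))
      Filter.atTop (nhds (μ (SG ν G))) := by
  set A : ℕ → Set (ℕ → Bool) := fun N => ⋃ y ∈ GN ν G N, cylSet y with hA
  -- first part
  have eq1 : SG ν G = ⋃ N : ℕ, A N := by
    ext α
    simp only [SG, Set.mem_setOf_eq, Set.mem_iUnion, hA]
    constructor
    · rintro ⟨n, x, hx, hpre⟩
      refine ⟨n, firstN α n, ?_, ?_⟩
      · rw [mem_GN_iff]
        exact ⟨firstN_length α n, x, hx, hpre⟩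
      · rw [mem_cylSet_iff, firstN_length]
    · rintro ⟨N, y, hy, hcy⟩
      rw [mem_GN_iff] at hy
      obtain ⟨hlen, x, hx, hpre⟩ := hy
      refine ⟨N, x, hx, ?_⟩
      rw [mem_cylSet_iff, hlen] at hcy
      rwa [hcy]
  -- monotonicity
  have mono : Monotone A := by
    intro N M hNM α hα
    simp only [hA, Set.mem_iUnion] at hα ⊢
    obtain ⟨y, hy, hcy⟩ := hα
    rw [mem_GN_iff] at hy
    obtain ⟨hlen, x, hx, hpre⟩ := hy
    rw [mem_cylSet_iff, hlen] at hcy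
    refine ⟨firstN α M, ?_, ?_⟩
    · rw [mem_GN_iff]
      refine ⟨firstN_length α M, x, hx, ?_⟩
      obtain ⟨t, ht⟩ := firstN_prefix α hNM
      rw [hcy] at ht
      calc x <+: ν y := hpre
        _ <+: ν (y ++ t) := hν.2 y t
        _ = ν (firstN α M) := by rw [ht]
    · rw [mem_cylSet_iff, firstN_length]
  -- measure of A N
  have measA : ∀ N : ℕ, μ (A N) = ((GN ν G N).card : ENNReal) * (2 : ENNReal) ^ (-(N : ℤ)) := by
    intro N
    have hdisj : Set.PairwiseDisjoint (↑(GN ν G N)) cylSet := by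
      intro y hy z hz hyz
      rw [Finset.mem_coe, mem_GN_iff] at hy hz
      rw [Function.onFun, Set.disjoint_left]
      intro α hαy hαz
      rw [mem_cylSet_iff, hy.1] at hαy
      rw [mem_cylSet_iff, hz.1] at hαz
      exact hyz (hαy ▸ hαz.symm ▸ rfl)
    rw [hA]
    rw [MeasureTheory.measure_biUnion_finset hdisj fun y _ => measurable_cylSet y]
    have : ∀ y ∈ GN ν G N, μ (cylSet y) = (2 : ENNReal) ^ (-(N : ℤ)) := by
      intro y hy
      rw [mem_GN_iff] at hy
      rw [hμ y, hy.1]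
    rw [Finset.sum_congr rfl this, Finset.sum_const, nsmul_eq_mul]
  have eq3 : μ (SG ν G) = ⨆ N : ℕ, ((GN ν G N).card : ENNReal) * (2 : ENNReal) ^ (-(N : ℤ)) := by
    rw [eq1, (Monotone.directed_le mono).measure_iUnion]
    exact iSup_congr measA
  refine ⟨eq1, mono, eq3, ?_⟩
  have hfun : (fun N : ℕ => ((GN ν G N).card : ENNReal) * (2 : ENNReal) ^ (-(N : ℤ)))
      = fun N => μ (A N) := funext fun N => (measA N).symm
  rw [hfun, eq3]
  have : (⨆ N : ℕ, ((GN ν G N).card : ENNReal) * (2 : ENNReal) ^ (-(N : ℤ)))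
      = ⨆ N, μ (A N) := iSup_congr fun N => (measA N).symm
  rw [this]
  exact tendsto_atTop_iSup fun n m h => MeasureTheory.measure_mono (mono h)
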